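/- Let $(\mathcal{X},d,\mu)$ be an RD-space with $\mu(\mathcal{X})=\infty$ and $q\in(1,\infty)$. For any ball $B(x_0,r_0)$ and any $\eta>0$, there exists a bounded-support Hölder function $h$ with $\mathrm{supp}(h)\subset\mathcal{X}\setminus B(x_0,r_0)$, $\int_{\mathcal{X}}h\,d\mu=1$, and $\|h\|_{L^q(\mu)}<\eta$. -/

import Mathlib

open MeasureTheory Metric Real ENNReal

noncomputable def clamp (t : ℝ) : ℝ := max 0 (min 1 t)

lemma clamp_nonneg (t : ℝ) : 0 ≤ clamp t := le_max_left _ _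

lemma clamp_le_one (t : ℝ) : clamp t ≤ 1 := max_le zero_le_one (min_le_left _ _)

lemma clamp_of_nonpos {t : ℝ} (h : t ≤ 0) : clamp t = 0 := by
  rw [clamp, max_eq_left]; exact (min_le_right 1 t).trans h

lemma clamp_of_one_le {t : ℝ} (h : 1 ≤ t) : clamp t = 1 := by
  rw [clamp, min_eq_left h, max_eq_right zero_le_one]

lemma clamp_mono : Monotone clamp := fun _ _ h =>
  max_le_max le_rfl (min_le_min le_rfl h)

lemma clamp_sub {a b : ℝ} (h : a ≤ b) : clamp b - clamp a ≤ b - a := by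
  simp only [clamp, max_def, min_def]; split_ifs <;> linarith

lemma clamp_lip (a b : ℝ) : |clamp a - clamp b| ≤ |a - b| := by
  rcases le_total a b with h | h
  · rw [abs_of_nonpos (sub_nonpos.mpr (clamp_mono h)), abs_of_nonpos (sub_nonpos.mpr h)]
    linarith [clamp_sub h]
  · rw [abs_of_nonneg (sub_nonneg.mpr (clamp_mono h)), abs_of_nonneg (sub_nonneg.mpr h)]
    linarith [clamp_sub h]

lemma continuous_clamp : Continuous clamp :=
  Continuous.max continuous_const (Continuous.min continuous_const continuous_id)

theorem rd_space_normalized_bump {X : Type*} [MetricSpace X] [MeasurableSpace X]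
    [BorelSpace X] (μ : Measure X) (C κ ν : ℝ) (hC : 1 ≤ C) (hκ : 0 < κ) (hκν : κ ≤ ν)
    (hfin : ∀ (x : X) (r : ℝ), μ (Metric.ball x r) ≠ ⊤)
    (hRD : ∀ (x : X) (r l : ℝ), 0 < r → 1 ≤ l →
      C⁻¹ * l ^ κ * (μ (Metric.ball x r)).toReal ≤ (μ (Metric.ball x (l * r))).toReal ∧
      (μ (Metric.ball x (l * r))).toReal ≤ C * l ^ ν * (μ (Metric.ball x r)).toReal)
    (hμ : μ Set.univ = ⊤)
    (q : ℝ) (hq : 1 < q) (x₀ : X) (r₀ : ℝ) (hr₀ : 0 < r₀) (η : ℝ) (hη : 0 < η) :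
    ∃ (ε : ℝ) (h : X → ℝ), ε ∈ Set.Ioc (0 : ℝ) 1 ∧
      (∃ K : ℝ, ∀ x y, |h x - h y| ≤ K * dist x y ^ ε) ∧
      Bornology.IsBounded (Function.support h) ∧
      Function.support h ⊆ (Metric.ball x₀ r₀)ᶜ ∧
      (∫ x, h x ∂μ) = 1 ∧
      eLpNorm h (ENNReal.ofReal q) μ < ENNReal.ofReal η := by
  have hq0 : 0 < q := lt_trans one_pos hq
  set β : ℝ := (q - 1) / q with hβ
  have hβpos : 0 < β := div_pos (by linarith) hq0
  set A : ℝ := max 1 (η⁻¹ ^ (1 / β)) with hA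
  have hA1 : (1 : ℝ) ≤ A := le_max_left _ _
  -- finiteness of the inner closed ball
  have hcbfin : μ (Metric.closedBall x₀ (r₀ + 1)) ≠ ⊤ :=
    ne_top_of_le_ne_top (hfin x₀ (r₀ + 2))
      (measure_mono (Metric.closedBall_subset_ball (by linarith)))
  -- choose a large ball
  have hUnion : (⋃ n : ℕ, Metric.ball x₀ (n : ℝ)) = Set.univ := by
    ext x
    simp only [Set.mem_iUnion, Set.mem_univ, iff_true, Metric.mem_ball]
    obtain ⟨n, hn⟩ := exists_nat_gt (dist x x₀)
    exact ⟨n, hn⟩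
  have hmono : Monotone (fun n : ℕ => Metric.ball x₀ (n : ℝ)) := fun a b hab =>
    Metric.ball_subset_ball (by exact_mod_cast hab)
  have hsup : (⊤ : ℝ≥0∞) = ⨆ n : ℕ, μ (Metric.ball x₀ (n : ℝ)) := by
    rw [← hμ, ← hUnion, hmono.directed_le.measure_iUnion]
  obtain ⟨n, hn⟩ : ∃ n : ℕ,
      ENNReal.ofReal (A + (μ (Metric.closedBall x₀ (r₀ + 1))).toReal)
        < μ (Metric.ball x₀ (n : ℝ)) := by
    rw [← lt_iSup_iff, ← hsup]; exact ENNReal.ofReal_lt_top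
  have hballfin : μ (Metric.ball x₀ (n : ℝ)) ≠ ⊤ := hfin _ _
  have hAnn : 0 ≤ A + (μ (Metric.closedBall x₀ (r₀ + 1))).toReal := by
    have := ENNReal.toReal_nonneg (a := μ (Metric.closedBall x₀ (r₀ + 1)))
    linarith
  have hnR : A + (μ (Metric.closedBall x₀ (r₀ + 1))).toReal
      < (μ (Metric.ball x₀ (n : ℝ))).toReal := by
    have h := (ENNReal.toReal_lt_toReal ENNReal.ofReal_ne_top hballfin).mpr hn
    rwa [ENNReal.toReal_ofReal hAnn] at h
  -- the bump function
  set f : X → ℝ := fun x => clamp (dist x x₀ - r₀) * clamp ((n : ℝ) + 1 - dist x x₀) with hfdef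
  have hf0 : ∀ x, 0 ≤ f x := fun x => mul_nonneg (clamp_nonneg _) (clamp_nonneg _)
  have hf1 : ∀ x, f x ≤ 1 := fun x =>
    mul_le_one₀ (clamp_le_one _) (clamp_nonneg _) (clamp_le_one _)
  have hfcont : Continuous f := by
    apply Continuous.mul
    · exact continuous_clamp.comp ((continuous_id.dist continuous_const).sub continuous_const)
    · exact continuous_clamp.comp (continuous_const.sub (continuous_id.dist continuous_const))
  have hfsupp : Function.support f ⊆ Metric.ball x₀ ((n : ℝ) + 1) := by
    intro x hx
    rw [Function.mem_support] at hx
    by_contra hxb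
    rw [Metric.mem_ball, not_lt] at hxb
    exact hx (by rw [hfdef]; simp [clamp_of_nonpos (by linarith : (n : ℝ) + 1 - dist x x₀ ≤ 0)])
  have hfsupp2 : Function.support f ⊆ (Metric.ball x₀ r₀)ᶜ := by
    intro x hx
    rw [Function.mem_support] at hx
    simp only [Set.mem_compl_iff, Metric.mem_ball, not_lt]
    by_contra hxb
    rw [not_le] at hxb
    exact hx (by rw [hfdef]; simp [clamp_of_nonpos (by linarith : dist x x₀ - r₀ ≤ 0)])
  -- integrability
  have hind : Integrable ((Metric.ball x₀ ((n : ℝ) + 1)).indicator fun _ => (1 : ℝ)) μ := by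
    rw [integrable_indicator_iff measurableSet_ball]
    exact integrableOn_const (hfin _ _)
  have hfint : Integrable f μ := by
    refine hind.mono hfcont.aestronglyMeasurable (ae_of_all _ fun x => ?_)
    by_cases hx : x ∈ Metric.ball x₀ ((n : ℝ) + 1)
    · rw [Set.indicator_of_mem hx]
      simp only [Real.norm_eq_abs, abs_of_nonneg (hf0 x), abs_one]
      exact hf1 x
    · have : f x = 0 := by
        by_contra h; exact hx (hfsupp (Function.mem_support.mpr h))
      simp [this]
  -- lower bound for the integral
  set S := Metric.ball x₀ (n : ℝ) \ Metric.closedBall x₀ (r₀ + 1) with hS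
  have hSmeas : MeasurableSet S := measurableSet_ball.diff measurableSet_closedBall
  have hfS : ∀ x ∈ S, f x = 1 := by
    intro x hx
    obtain ⟨hx1, hx2⟩ := hx
    rw [Metric.mem_ball] at hx1
    rw [Metric.mem_closedBall, not_le] at hx2
    rw [hfdef]
    simp [clamp_of_one_le (by linarith : (1:ℝ) ≤ dist x x₀ - r₀),
      clamp_of_one_le (by linarith : (1:ℝ) ≤ (n : ℝ) + 1 - dist x x₀)]
  have hSfin : μ S ≠ ⊤ := ne_top_of_le_ne_top hballfin (measure_mono Set.diff_subset)
  set J := ∫ x, f x ∂μ with hJdef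
  have hJ1 : (μ S).toReal ≤ J := by
    calc (μ S).toReal = ∫ _ in S, (1 : ℝ) ∂μ := by simp [measureReal_def]
      _ = ∫ x in S, f x ∂μ := setIntegral_congr_fun hSmeas fun x hx => (hfS x hx).symm
      _ ≤ J := setIntegral_le_integral hfint (ae_of_all _ hf0)
  have hsplit : (μ (Metric.ball x₀ (n : ℝ))).toReal
      ≤ (μ S).toReal + (μ (Metric.closedBall x₀ (r₀ + 1))).toReal := by
    have h1 : μ (Metric.ball x₀ (n : ℝ)) ≤ μ S + μ (Metric.closedBall x₀ (r₀ + 1)) := by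
      refine le_trans (measure_mono ?_) (measure_union_le _ _)
      intro x hx
      by_cases hc : x ∈ Metric.closedBall x₀ (r₀ + 1)
      · exact Or.inr hc
      · exact Or.inl ⟨hx, hc⟩
    calc (μ (Metric.ball x₀ (n : ℝ))).toReal
        ≤ (μ S + μ (Metric.closedBall x₀ (r₀ + 1))).toReal :=
          ENNReal.toReal_mono (ENNReal.add_ne_top.mpr ⟨hSfin, hcbfin⟩) h1
      _ = _ := ENNReal.toReal_add hSfin hcbfin
  have hJA : A < J := by linarith
  have hJpos : 0 < J := lt_of_lt_of_le one_pos (le_trans hA1 hJA.le)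
  -- the normalized function
  refine ⟨1, fun x => J⁻¹ * f x, ⟨one_pos, le_refl 1⟩, ⟨J⁻¹ * 2, ?_⟩, ?_, ?_, ?_, ?_⟩
  · -- Hölder (Lipschitz) estimate
    intro x y
    rw [Real.rpow_one]
    have key : |f x - f y| ≤ 2 * dist x y := by
      have hd : |dist x x₀ - dist y x₀| ≤ dist x y := abs_dist_sub_le x y x₀
      have hc1 : |clamp (dist x x₀ - r₀) - clamp (dist y x₀ - r₀)| ≤ dist x y := by
        refine le_trans (clamp_lip _ _) ?_
        calc |dist x x₀ - r₀ - (dist y x₀ - r₀)| = |dist x x₀ - dist y x₀| := by ring_nf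
          _ ≤ dist x y := hd
      have hc2 : |clamp ((n : ℝ) + 1 - dist x x₀) - clamp ((n : ℝ) + 1 - dist y x₀)|
          ≤ dist x y := by
        refine le_trans (clamp_lip _ _) ?_
        calc |(n : ℝ) + 1 - dist x x₀ - ((n : ℝ) + 1 - dist y x₀)|
            = |dist x x₀ - dist y x₀| := by rw [← abs_neg]; ring_nf
          _ ≤ dist x y := hd
      set a₁ := clamp (dist x x₀ - r₀)
      set a₂ := clamp (dist y x₀ - r₀)
      set b₁ := clamp ((n : ℝ) + 1 - dist x x₀)
      set b₂ := clamp ((n : ℝ) + 1 - dist y x₀)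
      have ha₁ : |a₁| ≤ 1 := by rw [abs_of_nonneg (clamp_nonneg _)]; exact clamp_le_one _
      have hb₂ : |b₂| ≤ 1 := by rw [abs_of_nonneg (clamp_nonneg _)]; exact clamp_le_one _
      have hfx : f x = a₁ * b₁ := rfl
      have hfy : f y = a₂ * b₂ := rfl
      calc |f x - f y| = |a₁ * (b₁ - b₂) + (a₁ - a₂) * b₂| := by
            rw [hfx, hfy]; congr 1; ring
        _ ≤ |a₁ * (b₁ - b₂)| + |(a₁ - a₂) * b₂| := abs_add_le _ _
        _ = |a₁| * |b₁ - b₂| + |a₁ - a₂| * |b₂| := by rw [abs_mul, abs_mul]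
        _ ≤ 1 * dist x y + dist x y * 1 := by
            refine add_le_add (mul_le_mul ha₁ hc2 (abs_nonneg _) one_pos.le) ?_
            exact mul_le_mul hc1 hb₂ (abs_nonneg _) dist_nonneg
        _ = 2 * dist x y := by ring
    calc |J⁻¹ * f x - J⁻¹ * f y| = J⁻¹ * |f x - f y| := by
          rw [← mul_sub, abs_mul, abs_of_nonneg (inv_nonneg.mpr hJpos.le)]
      _ ≤ J⁻¹ * (2 * dist x y) := by
          exact mul_le_mul_of_nonneg_left key (inv_nonneg.mpr hJpos.le)
      _ = J⁻¹ * 2 * dist x y := by ring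
  · -- bounded support
    refine Metric.isBounded_ball.subset (subset_trans ?_ hfsupp)
    intro x hx
    rw [Function.mem_support] at hx ⊢
    intro h; exact hx (by rw [h, mul_zero])
  · -- support avoids the ball
    refine subset_trans ?_ hfsupp2
    intro x hx
    rw [Function.mem_support] at hx ⊢
    intro h; exact hx (by rw [h, mul_zero])
  · -- integral equals 1
    rw [integral_const_mul, ← hJdef, inv_mul_cancel₀ hJpos.ne']
  · -- Lq norm estimate
    have hp0 : (ENNReal.ofReal q) ≠ 0 := by
      simp [ENNReal.ofReal_eq_zero, not_le, hq0]
    have hpt : (ENNReal.ofReal q) ≠ ⊤ := ENNReal.ofReal_ne_top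
    rw [eLpNorm_eq_lintegral_rpow_enorm_toReal hp0 hpt, ENNReal.toReal_ofReal hq0.le]
    have hJq : 0 ≤ J⁻¹ ^ q := Real.rpow_nonneg (inv_nonneg.mpr hJpos.le) q
    have key : ∫⁻ x, (‖J⁻¹ * f x‖₊ : ℝ≥0∞) ^ q ∂μ ≤ ENNReal.ofReal (J⁻¹ ^ q * J) := by
      have hptw : ∀ x, (‖J⁻¹ * f x‖₊ : ℝ≥0∞) ^ q ≤ ENNReal.ofReal (J⁻¹ ^ q * f x) := by
        intro x
        have hnn : 0 ≤ J⁻¹ * f x := mul_nonneg (inv_nonneg.mpr hJpos.le) (hf0 x)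
        have h1 : (‖J⁻¹ * f x‖₊ : ℝ≥0∞) = ENNReal.ofReal (J⁻¹ * f x) := by
          rw [← enorm_eq_nnnorm, ← ofReal_norm, Real.norm_eq_abs, abs_of_nonneg hnn]
        rw [h1, ENNReal.ofReal_rpow_of_nonneg hnn hq0.le]
        apply ENNReal.ofReal_le_ofReal
        rw [Real.mul_rpow (inv_nonneg.mpr hJpos.le) (hf0 x)]
        refine mul_le_mul_of_nonneg_left ?_ hJq
        rcases eq_or_lt_of_le (hf0 x) with h | h
        · rw [← h, Real.zero_rpow hq0.ne']
        · calc f x ^ q ≤ f x ^ (1 : ℝ) :=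
              Real.rpow_le_rpow_of_exponent_ge h (hf1 x) hq.le
            _ = f x := Real.rpow_one _
      calc ∫⁻ x, (‖J⁻¹ * f x‖₊ : ℝ≥0∞) ^ q ∂μ
          ≤ ∫⁻ x, ENNReal.ofReal (J⁻¹ ^ q * f x) ∂μ := lintegral_mono hptw
        _ = ∫⁻ x, ENNReal.ofReal (J⁻¹ ^ q) * ENNReal.ofReal (f x) ∂μ := by
            simp_rw [ENNReal.ofReal_mul hJq]
        _ = ENNReal.ofReal (J⁻¹ ^ q) * ∫⁻ x, ENNReal.ofReal (f x) ∂μ :=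
            lintegral_const_mul' _ _ ENNReal.ofReal_ne_top
        _ = ENNReal.ofReal (J⁻¹ ^ q) * ENNReal.ofReal J := by
            rw [← ofReal_integral_eq_lintegral_ofReal hfint (ae_of_all _ hf0)]
        _ = ENNReal.ofReal (J⁻¹ ^ q * J) := (ENNReal.ofReal_mul hJq).symm
    have hfinal : (J⁻¹ ^ q * J) ^ (1 / q) < η := by
      have e1 : J⁻¹ ^ q = J ^ (-q) := by
        rw [Real.inv_rpow hJpos.le, ← Real.rpow_neg hJpos.le]
      have e2 : J⁻¹ ^ q * J = J ^ (1 - q) := by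
        rw [e1]
        nth_rewrite 2 [← Real.rpow_one J]
        rw [← Real.rpow_add hJpos]
        congr 1; ring
      have e3 : (J ^ (1 - q)) ^ (1 / q) = J ^ (-β) := by
        rw [← Real.rpow_mul hJpos.le]
        congr 1
        field_simp [hβ]
        rw [hβ, mul_div_cancel₀ _ hq0.ne']; ring
      have h1 : η⁻¹ < J ^ β := by
        have hJη : η⁻¹ ^ (1 / β) < J := lt_of_le_of_lt (le_max_right _ _) hJA
        have hpow : (η⁻¹ ^ (1 / β)) ^ β = η⁻¹ := by
          rw [← Real.rpow_mul (inv_nonneg.mpr hη.le), one_div,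
            inv_mul_cancel₀ hβpos.ne', Real.rpow_one]
        calc η⁻¹ = (η⁻¹ ^ (1 / β)) ^ β := hpow.symm
          _ < J ^ β := Real.rpow_lt_rpow (Real.rpow_nonneg (inv_nonneg.mpr hη.le) _) hJη hβpos
      rw [e2, e3, Real.rpow_neg hJpos.le]
      calc (J ^ β)⁻¹ < (η⁻¹)⁻¹ := inv_strictAnti₀ (inv_pos.mpr hη) h1
        _ = η := inv_inv η
    calc (∫⁻ x, (‖J⁻¹ * f x‖₊ : ℝ≥0∞) ^ q ∂μ) ^ (1 / q)
        ≤ (ENNReal.ofReal (J⁻¹ ^ q * J)) ^ (1 / q) := by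
          exact ENNReal.rpow_le_rpow key (by positivity)
      _ = ENNReal.ofReal ((J⁻¹ ^ q * J) ^ (1 / q)) :=
          ENNReal.ofReal_rpow_of_nonneg (mul_nonneg hJq hJpos.le) (by positivity)
      _ < ENNReal.ofReal η := (ENNReal.ofReal_lt_ofReal_iff hη).mpr hfinal
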